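/- MSCR outperforms delayed-repair erasure correcting codes: For all integers k, d, t with k ≥ 1, t ≥ 1 and d ≥ k, one has t·(d + t − 1)/(d − k + t) ≤ k + t − 1 (as real numbers), with equality when d = k. Hence the total MSCR cost t·(M/k)(d+t−1)/(d−k+t) of repairing t failures never exceeds the total cost M(k+t−1)/k of a delayed erasure-code repair of t failures, and for d = k the two costs coincide. -/

import Mathlib

/-- MSCR outperforms delayed-repair erasure correcting codes, with equality when d = k. -/
theorem mscr_le_delayed_ecc (k d t : ℤ) (hk : 1 ≤ k) (ht : 1 ≤ t) (hd : k ≤ d) :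
    (t : ℝ) * ((d : ℝ) + t - 1) / ((d : ℝ) - k + t) ≤ (k : ℝ) + t - 1 ∧
    (d = k → (t : ℝ) * ((d : ℝ) + t - 1) / ((d : ℝ) - k + t) = (k : ℝ) + t - 1) := by
  have hk' : (1 : ℝ) ≤ (k : ℝ) := by exact_mod_cast hk
  have ht' : (1 : ℝ) ≤ (t : ℝ) := by exact_mod_cast ht
  have hd' : (k : ℝ) ≤ (d : ℝ) := by exact_mod_cast hd
  have hpos : (0 : ℝ) < (d : ℝ) - k + t := by linarith
  constructor
  · rw [div_le_iff₀ hpos]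
    nlinarith [mul_nonneg (sub_nonneg.2 hk') (sub_nonneg.2 hd')]
  · intro h
    subst h
    field_simp
    ring
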